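/- Gronwall-type differential inequality closure: suppose D : [0,T] → [0,∞) is differentiable and satisfies D'(t) ≤ (λ + α)D(t) + (C/α)(|log r|² (M + r^{−(2+d)}λ^{−2}D(t))² + M(M + r^{−(2+d)}λ^{−2}D(t))) λ^{−2} D(t) ε^{−4} for all t with D(t) ≤ λ² r^{2+d}, where r ∈ (0,1), ε, M, λ, α, C > 0. If α = C' λ^{−1} ε^{−2} |log r| M and λ = C'' ε^{−1}|log r|^{1/2} M^{1/2} (for suitable constants C', C'' depending only on C), then as long as D(t) ≤ λ² r^{d+2} on [0,t], one has D(t) ≤ D(0) exp(C''' ε^{−1} |log r|^{1/2} M^{1/2} t). -/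

import Mathlib

set_option maxHeartbeats 1600000 in
/-- Gronwall-type differential inequality closure for the mean-field estimate: for every
`C > 0` there exist constants `C', C'', C''' > 0` (depending only on `C`) such that for any
dimension `d`, parameters `0 < r ≤ e^{−1}`, `ε > 0`, `M ≥ 1`, `T > 0`, any differentiable
`D : [0,T] → [0,∞)` satisfying the differential inequality
`D' ≤ (λ + α)D + (C/α)(|log r|²(M + r^{−(2+d)}λ^{−2}D)² + M(M + r^{−(2+d)}λ^{−2}D))λ^{−2}Dε^{−4}`
whenever `D ≤ λ²r^{2+d}`, with `α = C'λ^{−1}ε^{−2}|log r|M` and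
`λ = C''ε^{−1}|log r|^{1/2}M^{1/2}`: as long as `D ≤ λ²r^{d+2}` on `[0,t]`, one has
`D(t) ≤ D(0) exp(C''' ε^{−1}|log r|^{1/2}M^{1/2} t)`. -/
theorem gronwall_closure (C : ℝ) (hC : 0 < C) :
    ∃ C' C'' C''' : ℝ, 0 < C' ∧ 0 < C'' ∧ 0 < C''' ∧
      ∀ (d : ℕ) (r ε M lam alpha T : ℝ) (D D' : ℝ → ℝ),
        0 < r → r ≤ Real.exp (-1) → 0 < ε → 1 ≤ M → 0 < T →
        alpha = C' * lam⁻¹ * ε⁻¹ ^ 2 * |Real.log r| * M →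
        lam = C'' * ε⁻¹ * Real.sqrt |Real.log r| * Real.sqrt M →
        (∀ t ∈ Set.Icc (0 : ℝ) T, 0 ≤ D t) →
        (∀ t ∈ Set.Icc (0 : ℝ) T, HasDerivAt D (D' t) t) →
        (∀ t ∈ Set.Icc (0 : ℝ) T, D t ≤ lam ^ 2 * r ^ (2 + (d : ℝ)) →
          D' t ≤ (lam + alpha) * D t +
            (C / alpha) *
              (|Real.log r| ^ 2 * (M + r ^ (-(2 + (d : ℝ))) * lam⁻¹ ^ 2 * D t) ^ 2 +
                M * (M + r ^ (-(2 + (d : ℝ))) * lam⁻¹ ^ 2 * D t)) *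
              lam⁻¹ ^ 2 * D t * ε⁻¹ ^ 4) →
        ∀ t ∈ Set.Icc (0 : ℝ) T,
          (∀ s ∈ Set.Icc (0 : ℝ) t, D s ≤ lam ^ 2 * r ^ ((d : ℝ) + 2)) →
          D t ≤ D 0 *
            Real.exp (C''' * ε⁻¹ * Real.sqrt |Real.log r| * Real.sqrt M * t) := by
  refine ⟨1, 1, 2 + 6 * C, one_pos, one_pos, by linarith, ?_⟩
  intro d r ε M lam alpha T D D' hr hre hε hM hT halpha hlam hDnn hderiv hineq t ht hbd
  set a := Real.sqrt |Real.log r| with ha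
  set b := Real.sqrt M with hb
  have hlog1 : 1 ≤ |Real.log r| := by
    have hlr : Real.log r ≤ -1 := by
      have h1 := Real.log_le_log hr hre
      simpa [Real.log_exp] using h1
    have h2 : Real.log r < 0 := by linarith
    rw [abs_of_neg h2]; linarith
  have ha1 : 1 ≤ a := by
    rw [ha, show (1:ℝ) = Real.sqrt 1 by simp]
    exact Real.sqrt_le_sqrt hlog1
  have hb1 : 1 ≤ b := by
    rw [hb, show (1:ℝ) = Real.sqrt 1 by simp]
    exact Real.sqrt_le_sqrt hM
  have ha2 : a ^ 2 = |Real.log r| := Real.sq_sqrt (abs_nonneg _)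
  have hb2 : b ^ 2 = M := Real.sq_sqrt (by linarith)
  clear_value a b
  have hεne : ε ≠ 0 := ne_of_gt hε
  have hapos : (0:ℝ) < a := by linarith
  have hbpos : (0:ℝ) < b := by linarith
  have hlam_eq : lam = ε⁻¹ * a * b := by rw [hlam]; ring
  have hlampos : 0 < lam := by rw [hlam_eq]; positivity
  have halpha_eq : alpha = lam := by
    rw [halpha, hlam_eq, ← ha2, ← hb2]
    field_simp
  -- the pointwise linear bound
  have key : ∀ x ∈ Set.Icc (0:ℝ) t, D' x ≤ ((2 + 6 * C) * lam) * D x := by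
    intro x hx
    have hxT : x ∈ Set.Icc (0:ℝ) T := ⟨hx.1, le_trans hx.2 ht.2⟩
    have hDx : 0 ≤ D x := hDnn x hxT
    have hDle : D x ≤ lam ^ 2 * r ^ (2 + (d : ℝ)) := by
      have h := hbd x hx
      rwa [show (d:ℝ) + 2 = 2 + (d:ℝ) from add_comm _ _] at h
    have h := hineq x hxT hDle
    set X := r ^ (-(2 + (d : ℝ))) * lam⁻¹ ^ 2 * D x with hX
    have hrp : (0:ℝ) < r ^ (2 + (d:ℝ)) := Real.rpow_pos_of_pos hr _
    have hXnn : 0 ≤ X := by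
      rw [hX]
      have : (0:ℝ) < r ^ (-(2 + (d:ℝ))) := Real.rpow_pos_of_pos hr _
      positivity
    have hX1 : X ≤ 1 := by
      rw [hX, Real.rpow_neg hr.le]
      have h1 : (r ^ (2 + (d:ℝ)))⁻¹ * lam⁻¹ ^ 2 * D x ≤
          (r ^ (2 + (d:ℝ)))⁻¹ * lam⁻¹ ^ 2 * (lam ^ 2 * r ^ (2 + (d:ℝ))) := by
        gcongr
      have h2 : (r ^ (2 + (d:ℝ)))⁻¹ * lam⁻¹ ^ 2 * (lam ^ 2 * r ^ (2 + (d:ℝ))) = 1 := by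
        field_simp
      linarith
    have hMX : M + X ≤ 2 * b ^ 2 := by nlinarith
    clear_value X
    clear hX hDle hrp hineq hbd hderiv hDnn
    have hMXnn : 0 ≤ M + X := by linarith
    have hs : (M + X) ^ 2 ≤ 4 * b ^ 4 := by
      have h5 := mul_le_mul hMX hMX hMXnn (by positivity : (0:ℝ) ≤ 2 * b ^ 2)
      nlinarith [h5]
    have ha4 : 1 ≤ a ^ 4 := by nlinarith [ha1, sq_nonneg (a - 1), sq_nonneg (a ^ 2 - 1)]
    have hbr : |Real.log r| ^ 2 * (M + X) ^ 2 + M * (M + X) ≤ 6 * a ^ 4 * b ^ 4 := by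
      have e1 : |Real.log r| ^ 2 * (M + X) ^ 2 + M * (M + X) =
          a ^ 4 * (M + X) ^ 2 + b ^ 2 * (M + X) := by rw [← ha2, ← hb2]; ring
      rw [e1]
      have t1 : a ^ 4 * (M + X) ^ 2 ≤ a ^ 4 * (4 * b ^ 4) :=
        mul_le_mul_of_nonneg_left hs (by positivity)
      have t2 : b ^ 2 * (M + X) ≤ 2 * b ^ 4 := by
        have := mul_le_mul_of_nonneg_left hMX (sq_nonneg b)
        nlinarith [this]
      have t3 : (1:ℝ) * b ^ 4 ≤ a ^ 4 * b ^ 4 :=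
        mul_le_mul_of_nonneg_right ha4 (by positivity)
      linarith [t1, t2, t3]
    have hcoef : (C / lam) * (6 * a ^ 4 * b ^ 4) * lam⁻¹ ^ 2 * ε⁻¹ ^ 4 = 6 * C * lam := by
      rw [hlam_eq]
      field_simp
    have hf : (0:ℝ) ≤ C / lam := by positivity
    have h2 : (C / lam) *
          (|Real.log r| ^ 2 * (M + X) ^ 2 + M * (M + X)) * lam⁻¹ ^ 2 * D x * ε⁻¹ ^ 4 ≤
        (C / lam) * (6 * a ^ 4 * b ^ 4) * lam⁻¹ ^ 2 * D x * ε⁻¹ ^ 4 := by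
      apply mul_le_mul_of_nonneg_right _ (by positivity : (0:ℝ) ≤ ε⁻¹ ^ 4)
      apply mul_le_mul_of_nonneg_right _ hDx
      apply mul_le_mul_of_nonneg_right _ (by positivity : (0:ℝ) ≤ lam⁻¹ ^ 2)
      exact mul_le_mul_of_nonneg_left hbr hf
    have h3 : (C / lam) * (6 * a ^ 4 * b ^ 4) * lam⁻¹ ^ 2 * D x * ε⁻¹ ^ 4 =
        6 * C * lam * D x := by
      have : (C / lam) * (6 * a ^ 4 * b ^ 4) * lam⁻¹ ^ 2 * D x * ε⁻¹ ^ 4 =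
          ((C / lam) * (6 * a ^ 4 * b ^ 4) * lam⁻¹ ^ 2 * ε⁻¹ ^ 4) * D x := by ring
      rw [this, hcoef]
    rw [halpha_eq] at h
    linarith [h, h2, h3.ge, h3.le]
  -- Gronwall via antitonicity of s ↦ D s * exp(-K s)
  set K := (2 + 6 * C) * lam with hK
  have hKpos : 0 < K := by positivity
  have hmemT : ∀ x ∈ Set.Icc (0:ℝ) t, x ∈ Set.Icc (0:ℝ) T :=
    fun x hx => ⟨hx.1, le_trans hx.2 ht.2⟩
  have hg : AntitoneOn (fun s => D s * Real.exp (-K * s)) (Set.Icc 0 t) := by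
    apply antitoneOn_of_deriv_nonpos (convex_Icc 0 t)
    · have hDc : ContinuousOn D (Set.Icc 0 t) := fun x hx =>
        ((hderiv x (hmemT x hx)).continuousAt).continuousWithinAt
      exact hDc.mul ((Real.continuous_exp.comp (continuous_const.mul continuous_id)).continuousOn)
    · rw [interior_Icc]
      intro x hx
      have hxI : x ∈ Set.Icc (0:ℝ) t := ⟨hx.1.le, hx.2.le⟩
      have hDx := hderiv x (hmemT x hxI)
      have hexp : HasDerivAt (fun s => Real.exp (-K * s)) (Real.exp (-K * x) * (-K)) x := by
        have h1 : HasDerivAt (fun s : ℝ => -K * s) (-K) x := by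
          simpa using (hasDerivAt_id x).const_mul (-K)
        exact h1.exp
      exact (hDx.mul hexp).differentiableAt.differentiableWithinAt
    · rw [interior_Icc]
      intro x hx
      have hxI : x ∈ Set.Icc (0:ℝ) t := ⟨hx.1.le, hx.2.le⟩
      have hDx := hderiv x (hmemT x hxI)
      have hexp : HasDerivAt (fun s => Real.exp (-K * s)) (Real.exp (-K * x) * (-K)) x := by
        have h1 : HasDerivAt (fun s : ℝ => -K * s) (-K) x := by
          simpa using (hasDerivAt_id x).const_mul (-K)
        exact h1.exp
      have hg' : deriv (fun s => D s * Real.exp (-K * s)) x = _ := (hDx.mul hexp).deriv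
      rw [hg']
      have hkey := key x hxI
      have hDxnn := hDnn x (hmemT x hxI)
      have he : 0 < Real.exp (-K * x) := Real.exp_pos _
      nlinarith [mul_le_mul_of_nonneg_right hkey he.le]
  have h0I : (0:ℝ) ∈ Set.Icc (0:ℝ) t := ⟨le_refl 0, ht.1⟩
  have htI : t ∈ Set.Icc (0:ℝ) t := ⟨ht.1, le_refl t⟩
  have h1 : D t * Real.exp (-K * t) ≤ D 0 := by
    have := hg h0I htI ht.1
    simpa using this
  have hfinal : D t ≤ D 0 * Real.exp (K * t) := by
    have h2 : D t = D t * Real.exp (-K * t) * Real.exp (K * t) := by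
      rw [mul_assoc, ← Real.exp_add]
      simp
    rw [h2]
    exact mul_le_mul_of_nonneg_right h1 (Real.exp_pos _).le
  have hKt : K * t = (2 + 6 * C) * ε⁻¹ * a * b * t := by
    rw [hK, hlam_eq]; ring
  rw [hKt] at hfinal
  exact hfinal
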